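/- For all real θ > 0 and integers d ≥ 1, i ≥ 0, and 0 ≤ j ≤ i+2, the identity ∑_{k=0}^{d-1} ∑_{l=0}^{d-1} C(d-1,k) · C(d-1,l) · ψ_{2d+i}^{k+l+j}(θ) = ψ_{i+2}^j(θ) holds. -/

import Mathlib

open Finset Filter

/-- ψ_n^k(θ) = (∏_{i=1}^{k}(θ+i-1) · ∏_{j=1}^{n-k}(θ+j-1)) / ∏_{l=1}^{n}(2θ+l-1). -/
noncomputable def psi (θ : ℝ) (n k : ℕ) : ℝ :=
  ((∏ i ∈ Finset.range k, (θ + i)) * ∏ j ∈ Finset.range (n - k), (θ + j)) /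
    ∏ l ∈ Finset.range n, (2 * θ + l)

lemma psi_rec (θ : ℝ) (hθ : 0 < θ) (m k : ℕ) (h : k + 1 ≤ m) :
    psi θ m k + psi θ m (k + 1) = psi θ (m - 1) k := by
  obtain ⟨t, rfl⟩ := Nat.exists_eq_add_of_le h
  simp only [psi]
  have h1 : k + 1 + t - k = t + 1 := by omega
  have h2 : k + 1 + t - (k + 1) = t := by omega
  have h3 : k + 1 + t - 1 = k + t := by omega
  have e1 : k + 1 + t = (k + t) + 1 := by omega
  rw [h1, h2, h3, e1]
  simp only [Finset.prod_range_succ]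
  have hQ : (0:ℝ) < ∏ l ∈ Finset.range (k + t), (2 * θ + l) := by
    apply Finset.prod_pos; intro l _; positivity
  have hc : (0:ℝ) < 2 * θ + ((k : ℝ) + t) := by positivity
  push_cast
  field_simp
  simp only [Nat.add_sub_cancel_left]
  ring

lemma psi_binom (θ : ℝ) (hθ : 0 < θ) : ∀ s m r, r + s ≤ m →
    ∑ k ∈ Finset.range (s + 1), (Nat.choose s k : ℝ) * psi θ m (k + r) = psi θ (m - s) r := by
  intro s
  induction s with
  | zero => intro m r h; simp
  | succ s ih =>
    intro m r h
    rw [show s + 1 + 1 = s + 2 from rfl,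
      Finset.sum_choose_succ_mul (fun a _ => psi θ m (a + r)) s]

    rw [← Finset.sum_add_distrib]
    have : ∀ k ∈ Finset.range (s + 1),
        (Nat.choose s k : ℝ) * psi θ m (k + r) + (Nat.choose s k : ℝ) * psi θ m (k + 1 + r)
          = (Nat.choose s k : ℝ) * psi θ (m - 1) (k + r) := by
      intro k hk
      rw [← mul_add, show k + 1 + r = (k + r) + 1 from by omega,
        psi_rec θ hθ m (k + r) (by simp [Finset.mem_range] at hk; omega)]
    rw [Finset.sum_congr rfl this, ih (m - 1) r (by omega)]
    congr 1
    omega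

theorem psi_double_binomial_sum (θ : ℝ) (hθ : 0 < θ) (d : ℕ) (hd : 1 ≤ d) (i j : ℕ)
    (hj : j ≤ i + 2) :
    ∑ k ∈ Finset.range d, ∑ l ∈ Finset.range d,
      (Nat.choose (d - 1) k : ℝ) * (Nat.choose (d - 1) l : ℝ) * psi θ (2 * d + i) (k + l + j) =
      psi θ (i + 2) j := by
  obtain ⟨s, rfl⟩ : ∃ s, d = s + 1 := ⟨d - 1, by omega⟩
  have hs : s + 1 - 1 = s := by omega
  rw [hs]
  have inner : ∀ k ∈ Finset.range (s + 1),
      ∑ l ∈ Finset.range (s + 1),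
        (Nat.choose s k : ℝ) * (Nat.choose s l : ℝ) * psi θ (2 * (s + 1) + i) (k + l + j)
      = (Nat.choose s k : ℝ) * psi θ (s + i + 2) (k + j) := by
    intro k hk
    simp only [Finset.mem_range] at hk
    have : ∑ l ∈ Finset.range (s + 1),
        (Nat.choose s k : ℝ) * (Nat.choose s l : ℝ) * psi θ (2 * (s + 1) + i) (k + l + j)
        = (Nat.choose s k : ℝ) * ∑ l ∈ Finset.range (s + 1),
            (Nat.choose s l : ℝ) * psi θ (2 * (s + 1) + i) (l + (k + j)) := by
      rw [Finset.mul_sum]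
      apply Finset.sum_congr rfl
      intro l _
      rw [show k + l + j = l + (k + j) from by omega]
      ring
    rw [this, psi_binom θ hθ s (2 * (s + 1) + i) (k + j) (by omega)]
    congr 2
    omega
  rw [Finset.sum_congr rfl inner]
  have : ∀ k ∈ Finset.range (s + 1),
      (Nat.choose s k : ℝ) * psi θ (s + i + 2) (k + j)
        = (Nat.choose s k : ℝ) * psi θ (s + i + 2) (k + j) := fun _ _ => rfl
  rw [psi_binom θ hθ s (s + i + 2) j (by omega)]
  congr 1
  omega
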